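/- arXiv:1702.05611 — 2 statements merged into one kernel-verified Lean document; each statement's English description precedes it below -/
import Mathlib

section
/- Let t be a selfadjoint regular operator on a Hilbert C*-module E with Cayley transform C_t = (t-i)(t+i)^{-1}, bounded transform F_t = t(1+t^2)^{-1/2}, and Q_t = (1+t^2)^{-1/2}. Then I + C_t = 2 F_t (F_t - i Q_t). -/
/-! Framework: unbounded (regular) operators on Hilbert C⋆-modules, bounded adjointable
operators, compact operators, Fredholm operators, Cayley and bounded transforms. -/

open scoped RightActions InnerProductSpace

noncomputable section

namespace RegularFredholm

/-- The Hilbert C⋆-module class of the older Mathlib (`E` a right `A`-module, with `A`-valued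
inner product linear in the second variable); Mathlib's `CStarModule` is now a left-module
notion with another convention, so the original one is spelled out here. -/
class CStarModule (A E : Type*) [NonUnitalSemiring A] [StarRing A] [Module ℂ A]
    [AddCommGroup E] [Module ℂ E] [PartialOrder A] [SMul Aᵐᵒᵖ E] [Norm A] [Norm E]
    extends Inner A E where
  inner_add_right {x} {y} {z} : inner x (y + z) = inner x y + inner x z
  inner_self_nonneg {x} : 0 ≤ inner x x
  inner_self {x} : inner x x = 0 ↔ x = 0
  inner_op_smul_right {a : A} {x y : E} : inner x (y <• a) = inner x y * a
  inner_smul_right_complex {z : ℂ} {x} {y} : inner x (z • y) = z • inner x y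
  star_inner x y : star (inner x y) = inner y x
  norm_eq_sqrt_norm_inner_self x : ‖x‖ = √‖inner x x‖

section OppInstances

variable {A : Type*} [NonUnitalCStarAlgebra A] [PartialOrder A] [StarOrderedRing A]

/-- The opposite of a C⋆-algebra is star-ordered. -/
instance instStarOrderedRingMulOpposite : StarOrderedRing Aᵐᵒᵖ :=
  StarOrderedRing.of_le_iff <| by
    intro x y
    change MulOpposite.unop x ≤ MulOpposite.unop y ↔ _
    rw [← sub_nonneg, CStarAlgebra.nonneg_iff_eq_mul_star_self]
    constructor
    · rintro ⟨b, hb⟩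
      refine ⟨MulOpposite.op b, ?_⟩
      apply MulOpposite.unop_injective
      simp only [MulOpposite.unop_add, MulOpposite.unop_mul, MulOpposite.unop_star,
        MulOpposite.unop_op]
      rw [← hb]
      abel
    · rintro ⟨s, rfl⟩
      refine ⟨MulOpposite.unop s, ?_⟩
      simp

variable {E : Type*} [NormedAddCommGroup E] [NormedSpace ℂ E] [SMul Aᵐᵒᵖ E] [CStarModule A E]

/-- An old-style Hilbert C⋆-module over `A` is a (current Mathlib) `CStarModule` over `Aᵐᵒᵖ`. -/
@[reducible]
noncomputable def toCStarModuleOp : _root_.CStarModule Aᵐᵒᵖ E where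
  inner x y := MulOpposite.op (Inner.inner A x y)
  inner_add_right := by
    intro x y z
    simp [CStarModule.inner_add_right]
  inner_self_nonneg := by
    intro x
    exact CStarModule.inner_self_nonneg (A := A)
  inner_self := by
    intro x
    rw [MulOpposite.op_eq_zero_iff]
    exact CStarModule.inner_self (A := A)
  inner_op_smul_right := by
    intro a x y
    apply MulOpposite.unop_injective
    have := CStarModule.inner_op_smul_right (A := A) (a := MulOpposite.unop a) (x := x) (y := y)
    simpa using this
  inner_smul_right_complex := by
    intro z x y
    apply MulOpposite.unop_injective
    simpa using CStarModule.inner_smul_right_complex (A := A) (z := z) (x := x) (y := y)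
  star_inner x y := by
    apply MulOpposite.unop_injective
    simpa using CStarModule.star_inner (A := A) x y
  norm_eq_sqrt_norm_inner_self x := CStarModule.norm_eq_sqrt_norm_inner_self (A := A) x

attribute [local instance] toCStarModuleOp

/-- The norm on `E ⊕ E`, as in the older Mathlib. -/
noncomputable instance instNormedAddCommGroupProd : NormedAddCommGroup (WithCStarModule A (E × E)) :=
  inferInstanceAs (NormedAddCommGroup (WithCStarModule Aᵐᵒᵖ (E × E)))

noncomputable instance instNormedSpaceProd : NormedSpace ℂ (WithCStarModule A (E × E)) :=
  inferInstanceAs (NormedSpace ℂ (WithCStarModule Aᵐᵒᵖ (E × E)))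

/-- The Hilbert C⋆-module `E ⊕ E`, as in the older Mathlib. -/
noncomputable instance instCStarModuleProd : CStarModule A (WithCStarModule A (E × E)) where
  inner x y := Inner.inner A x.1 y.1 + Inner.inner A x.2 y.2
  inner_add_right := by
    intro x y z
    simp only [WithCStarModule.add_fst, WithCStarModule.add_snd, CStarModule.inner_add_right]
    abel
  inner_self_nonneg := add_nonneg CStarModule.inner_self_nonneg CStarModule.inner_self_nonneg
  inner_self := by
    intro x
    rw [add_eq_zero_iff_of_nonneg CStarModule.inner_self_nonneg CStarModule.inner_self_nonneg,
      CStarModule.inner_self, CStarModule.inner_self]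
    constructor
    · rintro ⟨h1, h2⟩
      apply (WithCStarModule.equiv A (E × E)).injective
      ext
      · simpa using h1
      · simpa using h2
    · rintro rfl
      exact ⟨WithCStarModule.zero_fst, WithCStarModule.zero_snd⟩
  inner_op_smul_right := by
    intro a x y
    simp only [WithCStarModule.smul_fst, WithCStarModule.smul_snd,
      CStarModule.inner_op_smul_right, add_mul]
  inner_smul_right_complex := by
    intro z x y
    simp only [WithCStarModule.smul_fst, WithCStarModule.smul_snd,
      CStarModule.inner_smul_right_complex, smul_add]
  star_inner x y := by
    simp only [star_add, CStarModule.star_inner]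
  norm_eq_sqrt_norm_inner_self x := rfl

end OppInstances

/-- An unbounded operator on `E`: a (not necessarily closed) domain together with a
linear map into `E`. -/
structure UnboundedOp (A : Type*) [NonUnitalCStarAlgebra A] [PartialOrder A]
    [StarOrderedRing A] (E : Type*) [NormedAddCommGroup E] [NormedSpace ℂ E]
    [SMul Aᵐᵒᵖ E] [CStarModule A E] where
  dom : Submodule ℂ E
  toFun : dom →ₗ[ℂ] E

section Defs

variable {A : Type*} [NonUnitalCStarAlgebra A] [PartialOrder A] [StarOrderedRing A]
variable {E : Type*} [NormedAddCommGroup E] [NormedSpace ℂ E] [SMul Aᵐᵒᵖ E] [CStarModule A E]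

namespace UnboundedOp

variable (t s : UnboundedOp A E)

/-- Application of an unbounded operator at a point of its domain. -/
def app (x : E) (hx : x ∈ t.dom) : E := t.toFun ⟨x, hx⟩

/-- `t` is densely defined. -/
def DenselyDefined : Prop := Dense (t.dom : Set E)

/-- The graph of `t` as a subset of `E × E`. -/
def graph : Set (E × E) := {p | ∃ hx : p.1 ∈ t.dom, t.app p.1 hx = p.2}

/-- `t` is a closed operator. -/
def IsClosedOp : Prop := IsClosed t.graph

/-- `t'` is the adjoint of `t`: it is a formal adjoint which is maximal among formal
adjoints. -/
def IsAdjoint (t' : UnboundedOp A E) : Prop :=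
  (∀ x (hx : x ∈ t.dom) y (hy : y ∈ t'.dom),
      (⟪t.app x hx, y⟫_A : A) = ⟪x, t'.app y hy⟫_A) ∧
  ∀ y z : E, (∀ x (hx : x ∈ t.dom), (⟪t.app x hx, y⟫_A : A) = ⟪x, z⟫_A) →
    ∃ hy : y ∈ t'.dom, t'.app y hy = z

/-- `t` is a regular operator with adjoint `t'`: it is closed, densely defined, has
densely defined adjoint `t'`, and `1 + t'∘t` (i.e. `1 + t⋆t`) has dense range. -/
def IsRegularPair (t' : UnboundedOp A E) : Prop :=
  t.DenselyDefined ∧ t.IsClosedOp ∧ t.IsAdjoint t' ∧ t'.DenselyDefined ∧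
    Dense {y : E | ∃ (x : E) (hx : x ∈ t.dom) (hx' : t.app x hx ∈ t'.dom),
      y = x + t'.app (t.app x hx) hx'}

/-- `t` is a selfadjoint regular operator. -/
def IsSelfAdjointRegular : Prop := t.IsRegularPair t

/-- The sum of an unbounded operator and a bounded operator, with the same domain. -/
def addBounded (D : E →L[ℂ] E) : UnboundedOp A E where
  dom := t.dom
  toFun := t.toFun + (D : E →ₗ[ℂ] E) ∘ₗ t.dom.subtype

/-- The sum of two unbounded operators, with domain the intersection of the domains. -/
def add : UnboundedOp A E where
  dom := t.dom ⊓ s.dom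
  toFun := t.toFun ∘ₗ Submodule.inclusion inf_le_left +
    s.toFun ∘ₗ Submodule.inclusion inf_le_right

/-- A bounded operator regarded as an unbounded operator with full domain. -/
def ofCLM (T : E →L[ℂ] E) : UnboundedOp A E where
  dom := ⊤
  toFun := (T : E →ₗ[ℂ] E) ∘ₗ (⊤ : Submodule ℂ E).subtype

/-- `R` is the (two-sided) inverse of `t + c` for a scalar `c`, i.e. `R = (t + c)⁻¹`. -/
def IsResolvent (c : ℂ) (R : E →L[ℂ] E) : Prop :=
  (∀ x : E, ∃ h : R x ∈ t.dom, t.app (R x) h + c • R x = x) ∧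
  ∀ x (hx : x ∈ t.dom), R (t.app x hx + c • x) = x

/-- `R` is the (two-sided) inverse of `1 + t'∘t`, i.e. `R = (1 + t⋆t)⁻¹`
(for `t` with adjoint `t'`). -/
def IsResolventSq (t' : UnboundedOp A E) (R : E →L[ℂ] E) : Prop :=
  (∀ x : E, ∃ (h : R x ∈ t.dom) (h' : t.app (R x) h ∈ t'.dom),
      t'.app (t.app (R x) h) h' + R x = x) ∧
  ∀ x (hx : x ∈ t.dom) (hx' : t.app x hx ∈ t'.dom),
    R (x + t'.app (t.app x hx) hx') = x

/-- `C` is the Cayley transform of `t`, namely `C = (t - i)(t + i)⁻¹`. -/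
def IsCayley (C : E →L[ℂ] E) : Prop :=
  ∃ R : E →L[ℂ] E, t.IsResolvent Complex.I R ∧
    ∀ x : E, ∃ h : R x ∈ t.dom, C x = t.app (R x) h - Complex.I • R x

/-- `Q` is the operator `(1 + t⋆t)^(-1/2)` (with `t'` the adjoint of `t`): `Q` is a
positive selfadjoint bounded operator whose square is the inverse of `1 + t'∘t`. -/
def IsSqrtResolvent (t' : UnboundedOp A E) (Q : E →L[ℂ] E) : Prop :=
  (∀ x y : E, (⟪Q x, y⟫_A : A) = ⟪x, Q y⟫_A) ∧ (∀ x : E, (0 : A) ≤ ⟪x, Q x⟫_A) ∧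
    t.IsResolventSq t' (Q.comp Q)

/-- `F` is the bounded transform `t ∘ Q` of `t`, where `Q = (1 + t⋆t)^(-1/2)`. -/
def IsBoundedTransform (Q F : E →L[ℂ] E) : Prop :=
  ∀ x : E, ∃ h : Q x ∈ t.dom, F x = t.app (Q x) h

end UnboundedOp

end Defs

section BoundedDefs

variable (A : Type*) [NonUnitalCStarAlgebra A] [PartialOrder A] [StarOrderedRing A]
variable {E : Type*} [NormedAddCommGroup E] [NormedSpace ℂ E] [SMul Aᵐᵒᵖ E] [CStarModule A E]

/-- `S` is an adjoint for the bounded operator `T`. -/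
def IsAdjointableB (T S : E →L[ℂ] E) : Prop :=
  ∀ x y : E, (⟪T x, y⟫_A : A) = ⟪x, S y⟫_A

/-- `T` is a bounded adjointable operator. -/
def Adjointable (T : E →L[ℂ] E) : Prop := ∃ S : E →L[ℂ] E, IsAdjointableB A T S

/-- `T` is a "rank one" operator `θ_{x,y} : z ↦ x • ⟪y, z⟫`. -/
def IsRankOne (T : E →L[ℂ] E) : Prop :=
  ∃ x y : E, ∀ z : E, T z = x <• (⟪y, z⟫_A : A)

/-- `T` is a compact operator: it belongs to the closed linear span of the rank one
operators. -/
def IsCompactOp (T : E →L[ℂ] E) : Prop :=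
  T ∈ closure (Submodule.span ℂ {S : E →L[ℂ] E | IsRankOne A S} : Set (E →L[ℂ] E))

/-- `T` is a Fredholm bounded adjointable operator: `T` is adjointable and invertible
modulo the compact operators. -/
def IsFredholmB (T : E →L[ℂ] E) : Prop :=
  Adjointable A T ∧ ∃ G : E →L[ℂ] E, Adjointable A G ∧
    IsCompactOp A (G * T - 1) ∧ IsCompactOp A (T * G - 1)

/-- `U` is a unitary element of the bounded adjointable operators. -/
def IsUnitaryB (U : E →L[ℂ] E) : Prop :=
  ∃ U' : E →L[ℂ] E, IsAdjointableB A U U' ∧ U' * U = 1 ∧ U * U' = 1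

end BoundedDefs

section MoreDefs

variable {A : Type*} [NonUnitalCStarAlgebra A] [PartialOrder A] [StarOrderedRing A]
variable {E : Type*} [NormedAddCommGroup E] [NormedSpace ℂ E] [SMul Aᵐᵒᵖ E] [CStarModule A E]

/-- A regular operator `t` (with adjoint `t'`) is Fredholm if its bounded transform
`F_t = t (1 + t⋆t)^(-1/2)` is a Fredholm bounded adjointable operator. -/
def UnboundedOp.IsFredholm (t t' : UnboundedOp A E) : Prop :=
  ∃ Q F : E →L[ℂ] E, t.IsSqrtResolvent t' Q ∧ t.IsBoundedTransform Q F ∧ IsFredholmB A F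

/-- `s` is relatively `t`-compact: the map `s : E(t) → E`, where `E(t)` is the domain of
`t` equipped with the graph inner product `⟪x,y⟫ + ⟪t x, t y⟫`, lies in the closed linear
span of the rank one operators `E(t) → E`; i.e. it can be approximated, in the operator
norm for maps `E(t) → E`, by finite sums of operators
`θ_{x,y} : z ↦ x • (⟪y, z⟫ + ⟪t y, t z⟫)` with `x ∈ E`, `y ∈ E(t)`. -/
def IsRelativelyCompact (t s : UnboundedOp A E) (hsub : t.dom ≤ s.dom) : Prop :=
  ∀ ε > (0 : ℝ), ∃ (n : ℕ) (x : Fin n → E) (y : Fin n → E) (hy : ∀ i, y i ∈ t.dom),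
    ∀ z (hz : z ∈ t.dom),
      ‖s.app z (hsub hz) - ∑ i, x i <•
          ((⟪y i, z⟫_A : A) + ⟪t.app (y i) (hy i), t.app z hz⟫_A)‖ ≤
        ε * Real.sqrt ‖(⟪z, z⟫_A : A) + ⟪t.app z hz, t.app z hz⟫_A‖

/-- The graph of `t` inside the Hilbert C⋆-module `E ⊕ E`. -/
def graphSet (t : UnboundedOp A E) : Set (WithCStarModule A (E × E)) :=
  {p | ∃ hx : (WithCStarModule.equiv A (E × E) p).1 ∈ t.dom,
    t.app (WithCStarModule.equiv A (E × E) p).1 hx = (WithCStarModule.equiv A (E × E) p).2}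

/-- `P` is the orthogonal projection of `E ⊕ E` onto the graph of `t`: a selfadjoint
idempotent whose range is the graph of `t`.  The gap metric between regular operators
`t`, `s` is `‖P_{G(t)} - P_{G(s)}‖` for the associated graph projections. -/
def IsGraphProjection (t : UnboundedOp A E)
    (P : WithCStarModule A (E × E) →L[ℂ] WithCStarModule A (E × E)) : Prop :=
  IsAdjointableB A P P ∧ P * P = P ∧ Set.range P = graphSet t

end MoreDefs

variable {A : Type*} [NonUnitalCStarAlgebra A] [PartialOrder A] [StarOrderedRing A]
variable {E : Type*} [NormedAddCommGroup E] [NormedSpace ℂ E] [SMul Aᵐᵒᵖ E] [CStarModule A E]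

section RFHelpers

attribute [local instance] toCStarModuleOp

namespace CStarModule

lemma inner_eq_unop (x y : E) : (⟪x, y⟫_A : A) = MulOpposite.unop (inner Aᵐᵒᵖ x y) := rfl

lemma inner_add_left {x y z : E} : (⟪x + y, z⟫_A : A) = ⟪x, z⟫_A + ⟪y, z⟫_A := by
  simp only [inner_eq_unop, _root_.CStarModule.inner_add_left, MulOpposite.unop_add]

lemma inner_sub_left {x y z : E} : (⟪x - y, z⟫_A : A) = ⟪x, z⟫_A - ⟪y, z⟫_A := by
  simp only [inner_eq_unop, _root_.CStarModule.inner_sub_left, MulOpposite.unop_sub]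

lemma inner_sub_right {x y z : E} : (⟪x, y - z⟫_A : A) = ⟪x, y⟫_A - ⟪x, z⟫_A := by
  simp only [inner_eq_unop, _root_.CStarModule.inner_sub_right, MulOpposite.unop_sub]

@[simp]
lemma inner_neg_right {x y : E} : (⟪x, -y⟫_A : A) = -⟪x, y⟫_A := by
  simp only [inner_eq_unop, _root_.CStarModule.inner_neg_right, MulOpposite.unop_neg]

@[simp]
lemma inner_neg_left {x y : E} : (⟪-x, y⟫_A : A) = -⟪x, y⟫_A := by
  simp only [inner_eq_unop, _root_.CStarModule.inner_neg_left, MulOpposite.unop_neg]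

lemma inner_smul_left_complex {z : ℂ} {x y : E} : (⟪z • x, y⟫_A : A) = star z • ⟪x, y⟫_A := by
  simp only [inner_eq_unop, _root_.CStarModule.inner_smul_left_complex, MulOpposite.unop_smul]

lemma inner_smul_left_real {z : ℝ} {x y : E} : (⟪z • x, y⟫_A : A) = z • ⟪x, y⟫_A := by
  simp only [inner_eq_unop, _root_.CStarModule.inner_smul_left_real, MulOpposite.unop_smul]

lemma inner_smul_right_real {z : ℝ} {x y : E} : (⟪x, z • y⟫_A : A) = z • ⟪x, y⟫_A := by
  simp only [inner_eq_unop, _root_.CStarModule.inner_smul_right_real, MulOpposite.unop_smul]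

lemma norm_sq_eq {x : E} : ‖x‖ ^ 2 = ‖(⟪x, x⟫_A : A)‖ := by
  rw [norm_eq_sqrt_norm_inner_self (A := A) x, Real.sq_sqrt (norm_nonneg _)]

variable (E) in
lemma norm_inner_le {x y : E} : ‖(⟪x, y⟫_A : A)‖ ≤ ‖x‖ * ‖y‖ := by
  have := _root_.CStarModule.norm_inner_le (A := Aᵐᵒᵖ) E (x := x) (y := y)
  rw [inner_eq_unop, MulOpposite.norm_unop]
  exact this

@[fun_prop]
lemma continuous_inner_comp {X : Type*} [TopologicalSpace X] {f g : X → E}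
    (hf : Continuous f) (hg : Continuous g) : Continuous fun z => (⟪f z, g z⟫_A : A) := by
  have := (_root_.CStarModule.continuous_inner (A := Aᵐᵒᵖ) (E := E)).comp (hf.prodMk hg)
  exact MulOpposite.continuous_unop.comp this

end CStarModule

end RFHelpers


section AuxiliaryLemmas


variable {A : Type*} [NonUnitalCStarAlgebra A] [PartialOrder A] [StarOrderedRing A]
variable {E : Type*} [NormedAddCommGroup E] [NormedSpace ℂ E] [SMul Aᵐᵒᵖ E] [CStarModule A E]

private lemma inner_sub_self_le (a b : E) :
    (⟪a - b, a - b⟫_A : A) ≤ (2:ℝ) • ⟪a, a⟫_A + (2:ℝ) • ⟪b, b⟫_A := by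
  have h0 : (0:A) ≤ ⟪a + b, a + b⟫_A := CStarModule.inner_self_nonneg
  have hkey : (⟪a - b, a - b⟫_A : A) + ⟪a + b, a + b⟫_A
      = (2:ℝ) • ⟪a, a⟫_A + (2:ℝ) • ⟪b, b⟫_A := by
    simp only [CStarModule.inner_sub_right, CStarModule.inner_sub_left,
      CStarModule.inner_add_right, CStarModule.inner_add_left, two_smul]
    abel
  calc (⟪a - b, a - b⟫_A : A) ≤ ⟪a - b, a - b⟫_A + ⟪a + b, a + b⟫_A := le_add_of_nonneg_right h0
    _ = _ := hkey

private lemma parallelogram_le (u v : E) :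
    (⟪u + v, u + v⟫_A : A) ≤ (2:ℝ) • ⟪u, u⟫_A + (2:ℝ) • ⟪v, v⟫_A := by
  have h := inner_sub_self_le (A := A) u (-v)
  rw [sub_neg_eq_add] at h
  simpa using h

private lemma norm_apply_le_of_diag (G : E →L[ℂ] E) (c : ℝ) (hc : 0 ≤ c)
    (hsym : ∀ x y : E, (⟪G x, y⟫_A : A) = ⟪x, G y⟫_A)
    (h0 : ∀ x : E, (0:A) ≤ ⟪x, G x⟫_A)
    (h1 : ∀ x : E, (⟪x, G x⟫_A : A) ≤ c • ⟪x, x⟫_A) (x : E) :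
    ‖G x‖ ≤ 2 * c * ‖x‖ := by
  rcases eq_or_ne (G x) 0 with h | hGx
  · rw [h, norm_zero]; positivity
  rcases eq_or_ne x 0 with h | hx
  · exact absurd (by rw [h, map_zero]) hGx
  have hnx : (0:ℝ) < ‖x‖ := norm_pos_iff.mpr hx
  have hnG : (0:ℝ) < ‖G x‖ := norm_pos_iff.mpr hGx
  have key : ∀ lam : ℝ, 0 < lam →
      2 * ‖G x‖ ^ 2 ≤ c * (2 * (lam ^ 2 * ‖x‖ ^ 2) + 2 * (lam⁻¹ ^ 2 * ‖G x‖ ^ 2)) := by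
    intro lam hlam
    set u : E := ((lam : ℝ) : ℂ) • x with hu
    set v : E := ((lam⁻¹ : ℝ) : ℂ) • G x with hv
    have hGxGx : (0:A) ≤ (⟪G x, G x⟫_A : A) := CStarModule.inner_self_nonneg
    have hstar1 : star ((lam:ℝ) : ℂ) = ((lam:ℝ) : ℂ) := by
      simp [Complex.star_def, Complex.conj_ofReal]
    have hstar2 : star (((lam⁻¹ : ℝ)) : ℂ) = (((lam⁻¹ : ℝ)) : ℂ) := by
      simp [Complex.star_def, Complex.conj_ofReal]
    have hmul : (((lam:ℝ)) : ℂ) * (((lam⁻¹ : ℝ)) : ℂ) = 1 := by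
      rw [← Complex.ofReal_mul, mul_inv_cancel₀ hlam.ne']
      norm_num
    have hcross : (⟪u, G v⟫_A : A) + ⟪v, G u⟫_A = ⟪G x, G x⟫_A + ⟪G x, G x⟫_A := by
      rw [hu, hv, map_smul, map_smul]
      rw [CStarModule.inner_smul_left_complex, CStarModule.inner_smul_right_complex,
        CStarModule.inner_smul_left_complex, CStarModule.inner_smul_right_complex,
        hstar1, hstar2, smul_smul, smul_smul, hmul,
        mul_comm (((lam⁻¹ : ℝ)) : ℂ) (((lam:ℝ)) : ℂ), hmul, one_smul, one_smul, hsym x (G x)]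
    have hexp : (⟪u, G v⟫_A : A) + ⟪v, G u⟫_A
        = ⟪u + v, G (u + v)⟫_A - ⟪u, G u⟫_A - ⟪v, G v⟫_A := by
      rw [map_add]
      simp only [CStarModule.inner_add_right, CStarModule.inner_add_left]
      abel
    have hle1 : (⟪G x, G x⟫_A : A) + ⟪G x, G x⟫_A ≤ c • ⟪u + v, u + v⟫_A := by
      rw [← hcross, hexp]
      calc (⟪u + v, G (u + v)⟫_A : A) - ⟪u, G u⟫_A - ⟪v, G v⟫_A
          ≤ ⟪u + v, G (u + v)⟫_A := by
            have h' : (⟪u + v, G (u + v)⟫_A : A) - ⟪u, G u⟫_A - ⟪v, G v⟫_A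
                = ⟪u + v, G (u + v)⟫_A - (⟪u, G u⟫_A + ⟪v, G v⟫_A) := by abel
            rw [h']
            exact sub_le_self _ (add_nonneg (h0 u) (h0 v))
        _ ≤ c • ⟪u + v, u + v⟫_A := h1 (u + v)
    have hle2 : c • (⟪u + v, u + v⟫_A : A)
        ≤ c • ((2:ℝ) • ⟪u, u⟫_A + (2:ℝ) • ⟪v, v⟫_A) :=
      smul_le_smul_of_nonneg_left (parallelogram_le u v) hc
    have hfin := hle1.trans hle2
    have hpos : (0:A) ≤ (⟪G x, G x⟫_A : A) + ⟪G x, G x⟫_A := add_nonneg hGxGx hGxGx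
    have hnorm := CStarAlgebra.norm_le_norm_of_nonneg_of_le hpos hfin
    have hL : ‖(⟪G x, G x⟫_A : A) + ⟪G x, G x⟫_A‖ = 2 * ‖G x‖ ^ 2 := by
      rw [show (⟪G x, G x⟫_A : A) + ⟪G x, G x⟫_A = (2:ℝ) • ⟪G x, G x⟫_A from (two_smul ℝ _).symm,
        norm_smul, ← CStarModule.norm_sq_eq (E := E)]
      simp [Real.norm_eq_abs]
    have huu : (⟪u, u⟫_A : A) = (lam ^ 2) • ⟪x, x⟫_A := by
      rw [hu, CStarModule.inner_smul_left_complex, CStarModule.inner_smul_right_complex, hstar1,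
        smul_smul, show ((lam:ℝ) : ℂ) * ((lam:ℝ) : ℂ) = (((lam^2 : ℝ)):ℂ) by push_cast; ring,
        Complex.coe_smul]
    have hvv : (⟪v, v⟫_A : A) = (lam⁻¹ ^ 2) • ⟪G x, G x⟫_A := by
      rw [hv, CStarModule.inner_smul_left_complex, CStarModule.inner_smul_right_complex, hstar2,
        smul_smul, show (((lam⁻¹:ℝ)) : ℂ) * (((lam⁻¹:ℝ)) : ℂ) = (((lam⁻¹^2 : ℝ)):ℂ) by
          push_cast; ring,
        Complex.coe_smul]
    have hR : ‖c • ((2:ℝ) • (⟪u, u⟫_A : A) + (2:ℝ) • ⟪v, v⟫_A)‖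
        ≤ c * (2 * (lam ^ 2 * ‖x‖ ^ 2) + 2 * (lam⁻¹ ^ 2 * ‖G x‖ ^ 2)) := by
      rw [huu, hvv]
      have e1 : ‖(2:ℝ) • (lam ^ 2) • (⟪x, x⟫_A : A)‖ = 2 * (lam ^ 2 * ‖x‖ ^ 2) := by
        rw [norm_smul, norm_smul, ← CStarModule.norm_sq_eq (E := E)]
        simp [Real.norm_eq_abs, abs_of_nonneg (sq_nonneg lam)]
      have e2 : ‖(2:ℝ) • (lam⁻¹ ^ 2) • (⟪G x, G x⟫_A : A)‖ = 2 * (lam⁻¹ ^ 2 * ‖G x‖ ^ 2) := by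
        rw [norm_smul, norm_smul, ← CStarModule.norm_sq_eq (E := E)]
        simp [Real.norm_eq_abs, abs_of_nonneg (sq_nonneg lam⁻¹)]
      calc ‖c • ((2:ℝ) • (lam ^ 2) • (⟪x, x⟫_A : A) + (2:ℝ) • (lam⁻¹ ^ 2) • ⟪G x, G x⟫_A)‖
          ≤ c * ‖(2:ℝ) • (lam ^ 2) • (⟪x, x⟫_A : A) + (2:ℝ) • (lam⁻¹ ^ 2) • ⟪G x, G x⟫_A‖ := by
            rw [norm_smul, Real.norm_eq_abs, abs_of_nonneg hc]
        _ ≤ c * (‖(2:ℝ) • (lam ^ 2) • (⟪x, x⟫_A : A)‖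
              + ‖(2:ℝ) • (lam⁻¹ ^ 2) • (⟪G x, G x⟫_A : A)‖) := by
            gcongr
            exact norm_add_le _ _
        _ = c * (2 * (lam ^ 2 * ‖x‖ ^ 2) + 2 * (lam⁻¹ ^ 2 * ‖G x‖ ^ 2)) := by rw [e1, e2]
    calc 2 * ‖G x‖ ^ 2 = ‖(⟪G x, G x⟫_A : A) + ⟪G x, G x⟫_A‖ := hL.symm
      _ ≤ ‖c • ((2:ℝ) • (⟪u, u⟫_A : A) + (2:ℝ) • ⟪v, v⟫_A)‖ := hnorm
      _ ≤ _ := hR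
  set lam : ℝ := Real.sqrt (‖G x‖ / ‖x‖) with hlamdef
  have hlampos : 0 < lam := Real.sqrt_pos.mpr (by positivity)
  have hlamsq : lam ^ 2 = ‖G x‖ / ‖x‖ := Real.sq_sqrt (by positivity)
  have hk := key lam hlampos
  have hinv : lam⁻¹ ^ 2 = ‖x‖ / ‖G x‖ := by
    rw [inv_pow, hlamsq, inv_div]
  rw [hlamsq, hinv] at hk
  have h1' : ‖G x‖ / ‖x‖ * ‖x‖ ^ 2 = ‖G x‖ * ‖x‖ := by field_simp
  have h2' : ‖x‖ / ‖G x‖ * ‖G x‖ ^ 2 = ‖x‖ * ‖G x‖ := by field_simp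
  rw [h1', h2'] at hk
  nlinarith [hk, hnG, hnx]


private lemma smul_le_one_of_half {a : A} (u : ℝ) (hu0 : 0 ≤ u) (hu : u ≤ 1) (ha : 0 ≤ a) :
    u • a ≤ a := by
  have h : (0:A) ≤ (1 - u) • a := smul_nonneg (by linarith) ha
  have heq : a - u • a = (1 - u) • a := by rw [sub_smul, one_smul]
  exact sub_nonneg.mp (by rw [heq]; exact h)

private lemma Q_apply_eq_zero (Q : E →L[ℂ] E)
    (hsym : ∀ x y : E, (⟪Q x, y⟫_A : A) = ⟪x, Q y⟫_A)
    (hpos : ∀ x : E, (0:A) ≤ ⟪x, Q x⟫_A)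
    (y : E) (h : (⟪y, Q y⟫_A : A) = 0) : Q y = 0 := by
  set b : A := ⟪Q y, Q y⟫_A with hb
  set c : A := ⟪Q y, Q (Q y)⟫_A with hc
  have hbnn : (0:A) ≤ b := CStarModule.inner_self_nonneg
  have hyQQy : (⟪y, Q (Q y)⟫_A : A) = b := by rw [← hsym, hb]
  have key : ∀ n : ℕ, (2 * (n:ℝ)) • b ≤ c := by
    intro n
    have hp := hpos (Q y - ((n:ℝ) : ℂ) • y)
    have hexp : (⟪Q y - ((n:ℝ) : ℂ) • y, Q (Q y - ((n:ℝ) : ℂ) • y)⟫_A : A)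
        = c - (2 * (n:ℝ)) • b := by
      rw [map_sub, map_smul, CStarModule.inner_sub_right, CStarModule.inner_sub_left,
        CStarModule.inner_sub_left, CStarModule.inner_smul_left_complex,
        CStarModule.inner_smul_left_complex, CStarModule.inner_smul_right_complex,
        CStarModule.inner_smul_right_complex,
        show star (((n:ℝ)) : ℂ) = (((n:ℝ)) : ℂ) by simp [Complex.star_def, Complex.conj_ofReal],
        Complex.coe_smul, Complex.coe_smul, Complex.coe_smul, h, smul_zero, smul_zero, sub_zero,
        hyQQy, ← hb, ← hc, two_mul, add_smul]
      abel
    rw [hexp] at hp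
    exact sub_nonneg.mp hp
  have hnb : ∀ n : ℕ, 2 * (n:ℝ) * ‖b‖ ≤ ‖c‖ := by
    intro n
    have h1 : (0:A) ≤ (2 * (n:ℝ)) • b := smul_nonneg (by positivity) hbnn
    have h2 := CStarAlgebra.norm_le_norm_of_nonneg_of_le h1 (key n)
    rw [norm_smul, Real.norm_eq_abs, abs_of_nonneg (by positivity : (0:ℝ) ≤ 2 * (n:ℝ))] at h2
    exact h2
  have hbz : ‖b‖ = 0 := by
    by_contra hne
    have hbpos : 0 < ‖b‖ := lt_of_le_of_ne (norm_nonneg _) (Ne.symm hne)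
    obtain ⟨n, hn⟩ := exists_nat_gt (‖c‖ / (2 * ‖b‖))
    have := hnb n
    rw [div_lt_iff₀ (by positivity)] at hn
    nlinarith
  have : ‖Q y‖ ^ 2 = 0 := by rw [CStarModule.norm_sq_eq (A := A) (E := E), ← hb, hbz]
  have : ‖Q y‖ = 0 := by nlinarith [norm_nonneg (Q y)]
  exact norm_eq_zero.mp this


private def useq : ℕ → ℝ
  | 0 => 1/2
  | (n+1) => useq n - useq n ^ 2

private lemma useq_mem : ∀ n : ℕ, 0 ≤ useq n ∧ useq n ≤ 1/((n:ℝ)+2) := by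
  intro n
  induction n with
  | zero => norm_num [useq]
  | succ n ih =>
    obtain ⟨h0, h1⟩ := ih
    have hn0 : (0:ℝ) ≤ (n:ℝ) := Nat.cast_nonneg n
    have hn2 : (0:ℝ) < (n:ℝ) + 2 := by positivity
    set v : ℝ := 1/((n:ℝ)+2) with hv
    have hvhalf : v ≤ 1/2 := by
      rw [hv, div_le_div_iff₀ hn2 (by norm_num)]
      linarith
    have hv0 : 0 < v := by positivity
    have hhalf : useq n ≤ 1/2 := h1.trans hvhalf
    have hstep : useq (n+1) = useq n - useq n ^ 2 := rfl
    constructor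
    · rw [hstep]
      nlinarith
    · rw [hstep]
      have hmono : useq n - useq n ^ 2 ≤ v - v ^ 2 := by
        nlinarith [mul_nonneg (sub_nonneg.mpr h1) (by nlinarith : (0:ℝ) ≤ 1 - useq n - v)]
      refine hmono.trans ?_
      have hcast : ((n+1:ℕ):ℝ) + 2 = (n:ℝ) + 3 := by push_cast; ring
      rw [hcast, hv]
      rw [div_pow, one_pow, div_sub_div _ _ (ne_of_gt hn2) (by positivity),
        div_le_div_iff₀ (by positivity) (by positivity)]
      nlinarith

private def opseq (G : E →L[ℂ] E) : ℕ → E →L[ℂ] E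
  | 0 => G
  | (n+1) => opseq G n - (opseq G n).comp (opseq G n)

private lemma opseq_succ_apply (G : E →L[ℂ] E) (n : ℕ) (x : E) :
    opseq G (n+1) x = opseq G n x - opseq G n (opseq G n x) := rfl

private lemma opseq_props (Q G : E →L[ℂ] E)
    (hQcomm : ∀ x : E, Q (G x) = G (Q x))
    (hGsym : ∀ x y : E, (⟪G x, y⟫_A : A) = ⟪x, G y⟫_A)
    (hGpos : ∀ x : E, (0:A) ≤ ⟪x, G x⟫_A)
    (hGle : ∀ x : E, (⟪x, G x⟫_A : A) ≤ useq 0 • ⟪x, x⟫_A) :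
    ∀ n : ℕ, (∀ x y : E, (⟪opseq G n x, y⟫_A : A) = ⟪x, opseq G n y⟫_A)
      ∧ (∀ x : E, Q (opseq G n x) = opseq G n (Q x))
      ∧ (∀ x : E, (0:A) ≤ ⟪x, opseq G n x⟫_A)
      ∧ (∀ x : E, (⟪x, opseq G n x⟫_A : A) ≤ useq n • ⟪x, x⟫_A) := by
  intro n
  induction n with
  | zero => exact ⟨hGsym, hQcomm, hGpos, hGle⟩
  | succ n ih =>
    obtain ⟨hsym, hcomm, hpos, hle⟩ := ih
    have hu := useq_mem n
    have hn0 : (0:ℝ) ≤ (n:ℝ) := Nat.cast_nonneg n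
    have hun2 : (0:ℝ) < (n:ℝ) + 2 := by positivity
    have huhalf : useq n ≤ 1/2 := by
      refine hu.2.trans ?_
      rw [div_le_div_iff₀ hun2 (by norm_num)]
      linarith
    have hTle1 : ∀ z : E, (⟪z, opseq G n z⟫_A : A) ≤ ⟪z, z⟫_A := by
      intro z
      refine (hle z).trans ?_
      exact smul_le_one_of_half _ hu.1 (by linarith) CStarModule.inner_self_nonneg
    have hsym' : ∀ x y : E, (⟪opseq G (n+1) x, y⟫_A : A) = ⟪x, opseq G (n+1) y⟫_A := by
      intro x y
      rw [opseq_succ_apply, opseq_succ_apply, CStarModule.inner_sub_left,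
        CStarModule.inner_sub_right, hsym x y, hsym (opseq G n x) y, hsym x (opseq G n y)]
    have hcomm' : ∀ x : E, Q (opseq G (n+1) x) = opseq G (n+1) (Q x) := by
      intro x
      rw [opseq_succ_apply, opseq_succ_apply]
      simp only [map_sub, hcomm]
    have hpos' : ∀ x : E, (0:A) ≤ ⟪x, opseq G (n+1) x⟫_A := by
      intro x
      have e1 : (⟪opseq G n x, opseq G n x⟫_A : A) = ⟪x, opseq G n (opseq G n x)⟫_A :=
        hsym x (opseq G n x)
      have e2 : (⟪opseq G n x, opseq G n (opseq G n x)⟫_A : A)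
          = ⟪x, opseq G n (opseq G n (opseq G n x))⟫_A := hsym x (opseq G n (opseq G n x))
      have hdecomp : (⟪x, opseq G (n+1) x⟫_A : A)
          = (⟪opseq G n x, opseq G n x⟫_A - ⟪opseq G n x, opseq G n (opseq G n x)⟫_A)
            + ⟪x - opseq G n x, opseq G n x - opseq G n (opseq G n x)⟫_A := by
        rw [opseq_succ_apply]
        simp only [CStarModule.inner_sub_left, CStarModule.inner_sub_right, e1, e2]
        abel
      have h1 : (0:A) ≤ ⟪opseq G n x, opseq G n x⟫_A - ⟪opseq G n x, opseq G n (opseq G n x)⟫_A :=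
        sub_nonneg.mpr (hTle1 (opseq G n x))
      have h2 : (0:A) ≤ ⟪x - opseq G n x, opseq G n x - opseq G n (opseq G n x)⟫_A := by
        rw [show opseq G n x - opseq G n (opseq G n x) = opseq G n (x - opseq G n x) by
          rw [map_sub]]
        exact hpos (x - opseq G n x)
      rw [hdecomp]
      exact add_nonneg h1 h2
    have hle' : ∀ x : E, (⟪x, opseq G (n+1) x⟫_A : A) ≤ useq (n+1) • ⟪x, x⟫_A := by
      intro x
      set u : ℝ := useq n with hudef
      set bx : E := u • x - opseq G n x with hbx
      have eTx : (⟪opseq G n x, x⟫_A : A) = ⟪x, opseq G n x⟫_A := hsym x x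
      have eTT : (⟪opseq G n x, opseq G n x⟫_A : A) = ⟪x, opseq G n (opseq G n x)⟫_A :=
        hsym x (opseq G n x)
      have hbb : (⟪bx, bx⟫_A : A) = (u ^ 2) • ⟪x, x⟫_A
          - (u • ⟪x, opseq G n x⟫_A + u • ⟪x, opseq G n x⟫_A)
          + ⟪x, opseq G n (opseq G n x)⟫_A := by
        rw [hbx]
        simp only [CStarModule.inner_sub_left, CStarModule.inner_sub_right,
          CStarModule.inner_smul_left_real, CStarModule.inner_smul_right_real, smul_sub,
          smul_smul, eTx, eTT]
        rw [show u * u = u ^ 2 by ring]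
        abel
      have hxb : (⟪x, bx⟫_A : A) = u • ⟪x, x⟫_A - ⟪x, opseq G n x⟫_A := by
        rw [hbx, CStarModule.inner_sub_right, CStarModule.inner_smul_right_real]
      have hident : useq (n+1) • (⟪x, x⟫_A : A) - ⟪x, opseq G (n+1) x⟫_A
          = ⟪bx, bx⟫_A + (1 - 2 * u) • ⟪x, bx⟫_A := by
        rw [hbb, hxb, opseq_succ_apply, CStarModule.inner_sub_right,
          show useq (n+1) = u - u ^ 2 from rfl, sub_smul, sub_smul, one_smul, smul_sub,
          show (2 * u) • (u • (⟪x, x⟫_A : A)) = (u ^ 2) • ⟪x, x⟫_A + (u ^ 2) • ⟪x, x⟫_A by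
            rw [smul_smul, ← add_smul]; ring_nf,
          show (2 * u) • (⟪x, opseq G n x⟫_A : A)
              = u • ⟪x, opseq G n x⟫_A + u • ⟪x, opseq G n x⟫_A by rw [← add_smul]; ring_nf]
        abel
      have hrhs : (0:A) ≤ ⟪bx, bx⟫_A + (1 - 2 * u) • ⟪x, bx⟫_A := by
        refine add_nonneg CStarModule.inner_self_nonneg ?_
        refine smul_nonneg (by linarith) ?_
        rw [hxb]
        exact sub_nonneg.mpr (hle x)
      rw [← hident] at hrhs
      exact sub_nonneg.mp hrhs
    exact ⟨hsym', hcomm', hpos', hle'⟩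


/-- If `G` is symmetric positive with diagonal `≤ (1/2)⟪x,x⟫` and commutes with the
symmetric positive `Q`, and the diagonal of `Q G` is nonpositive, then it vanishes. -/
private lemma inner_QG_eq_zero (Q G : E →L[ℂ] E)
    (hQsym : ∀ x y : E, (⟪Q x, y⟫_A : A) = ⟪x, Q y⟫_A)
    (hQpos : ∀ x : E, (0:A) ≤ ⟪x, Q x⟫_A)
    (hQcomm : ∀ x : E, Q (G x) = G (Q x))
    (hGsym : ∀ x y : E, (⟪G x, y⟫_A : A) = ⟪x, G y⟫_A)
    (hGpos : ∀ x : E, (0:A) ≤ ⟪x, G x⟫_A)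
    (hGle : ∀ x : E, (⟪x, G x⟫_A : A) ≤ (useq 0) • ⟪x, x⟫_A)
    (hneg : ∀ x : E, (⟪x, Q (G x)⟫_A : A) ≤ 0) (x : E) :
    (⟪x, Q (G x)⟫_A : A) = 0 := by
  have hprops := opseq_props Q G hQcomm hGsym hGpos hGle
  -- telescoping: the difference s₀ - sₙ is a sum of nonnegative terms
  have hstep : ∀ n : ℕ, (0:A) ≤ ⟪x, Q (opseq G n x)⟫_A - ⟪x, Q (opseq G (n+1) x)⟫_A := by
    intro n
    obtain ⟨hsym, hcomm, _, _⟩ := hprops n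
    have : (⟪x, Q (opseq G n x)⟫_A : A) - ⟪x, Q (opseq G (n+1) x)⟫_A
        = ⟪opseq G n x, Q (opseq G n x)⟫_A := by
      rw [opseq_succ_apply, map_sub, CStarModule.inner_sub_right, sub_sub_cancel,
        hcomm (opseq G n x), ← hsym x (Q (opseq G n x))]
    rw [this]
    exact hQpos (opseq G n x)
  have htel : ∀ n : ℕ, (0:A) ≤ ⟪x, Q (G x)⟫_A - ⟪x, Q (opseq G n x)⟫_A := by
    intro n
    induction n with
    | zero => rw [show opseq G 0 = G from rfl, sub_self]
    | succ n ih =>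
      have h := hstep n
      have : (⟪x, Q (G x)⟫_A : A) - ⟪x, Q (opseq G (n+1) x)⟫_A
          = (⟪x, Q (G x)⟫_A - ⟪x, Q (opseq G n x)⟫_A)
            + (⟪x, Q (opseq G n x)⟫_A - ⟪x, Q (opseq G (n+1) x)⟫_A) := by abel
      rw [this]
      exact add_nonneg ih h
  -- the remainder term tends to zero in norm
  have hrem : ∀ n : ℕ, ‖(⟪x, Q (opseq G n x)⟫_A : A)‖ ≤ ‖x‖ * (‖Q‖ * (2 * useq n * ‖x‖)) := by
    intro n
    obtain ⟨hsym, _, hpos, hle⟩ := hprops n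
    have hn := norm_apply_le_of_diag (opseq G n) (useq n) (useq_mem n).1 hsym hpos hle x
    calc ‖(⟪x, Q (opseq G n x)⟫_A : A)‖ ≤ ‖x‖ * ‖Q (opseq G n x)‖ := CStarModule.norm_inner_le E
      _ ≤ ‖x‖ * (‖Q‖ * ‖opseq G n x‖) :=
          mul_le_mul_of_nonneg_left (Q.le_opNorm _) (norm_nonneg _)
      _ ≤ ‖x‖ * (‖Q‖ * (2 * useq n * ‖x‖)) :=
          mul_le_mul_of_nonneg_left (mul_le_mul_of_nonneg_left hn (norm_nonneg _))
            (norm_nonneg _)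
  -- combine: 0 ≤ s₀ - sₙ ≤ -sₙ, hence ‖s₀‖ ≤ 2‖sₙ‖ → 0
  have hkey : ∀ n : ℕ, ‖(⟪x, Q (G x)⟫_A : A)‖ ≤ 2 * (‖x‖ * (‖Q‖ * (2 * useq n * ‖x‖))) := by
    intro n
    have h1 := htel n
    have h2 : (⟪x, Q (G x)⟫_A : A) - ⟪x, Q (opseq G n x)⟫_A ≤ - ⟪x, Q (opseq G n x)⟫_A := by
      have := hneg x
      have e : (⟪x, Q (G x)⟫_A : A) - ⟪x, Q (opseq G n x)⟫_A
          = ⟪x, Q (G x)⟫_A + (- ⟪x, Q (opseq G n x)⟫_A) := by abel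
      rw [e]
      exact add_le_of_nonpos_left (hneg x)
    have h3 := CStarAlgebra.norm_le_norm_of_nonneg_of_le h1 h2
    rw [norm_neg] at h3
    calc ‖(⟪x, Q (G x)⟫_A : A)‖
        = ‖(⟪x, Q (G x)⟫_A - ⟪x, Q (opseq G n x)⟫_A) + ⟪x, Q (opseq G n x)⟫_A‖ :=
          congrArg norm (by abel)
      _ ≤ ‖(⟪x, Q (G x)⟫_A : A) - ⟪x, Q (opseq G n x)⟫_A‖ + ‖(⟪x, Q (opseq G n x)⟫_A : A)‖ :=
          norm_add_le _ _
      _ ≤ ‖(⟪x, Q (opseq G n x)⟫_A : A)‖ + ‖(⟪x, Q (opseq G n x)⟫_A : A)‖ := by gcongr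
      _ = 2 * ‖(⟪x, Q (opseq G n x)⟫_A : A)‖ := by ring
      _ ≤ 2 * (‖x‖ * (‖Q‖ * (2 * useq n * ‖x‖))) := by
          have := hrem n
          linarith
  -- conclude by letting n → ∞
  have hz : ‖(⟪x, Q (G x)⟫_A : A)‖ = 0 := by
    by_contra hne
    have hpos' : 0 < ‖(⟪x, Q (G x)⟫_A : A)‖ := lt_of_le_of_ne (norm_nonneg _) (Ne.symm hne)
    set Cq : ℝ := 4 * ‖x‖ * ‖Q‖ * ‖x‖ + 1 with hCq
    have hCpos : 0 < Cq := by positivity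
    obtain ⟨n, hn⟩ := exists_nat_gt (Cq / ‖(⟪x, Q (G x)⟫_A : A)‖)
    have h1 := hkey n
    have h2 : useq n ≤ 1/((n:ℝ)+2) := (useq_mem n).2
    have h3 : 2 * (‖x‖ * (‖Q‖ * (2 * useq n * ‖x‖))) ≤ (Cq - 1) / ((n:ℝ)+2) := by
      rw [hCq]
      have hn2 : (0:ℝ) < (n:ℝ) + 2 := by positivity
      have : 2 * (‖x‖ * (‖Q‖ * (2 * useq n * ‖x‖)))
          = (4 * ‖x‖ * ‖Q‖ * ‖x‖) * useq n := by ring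
      rw [this]
      have h4 : (4 * ‖x‖ * ‖Q‖ * ‖x‖) * useq n ≤ (4 * ‖x‖ * ‖Q‖ * ‖x‖) * (1/((n:ℝ)+2)) := by
        have hc4 : (0:ℝ) ≤ 4 * ‖x‖ * ‖Q‖ * ‖x‖ := by positivity
        exact mul_le_mul_of_nonneg_left h2 hc4
      refine h4.trans ?_
      rw [add_sub_cancel_right]
      rw [mul_one_div]
    have h5 : ‖(⟪x, Q (G x)⟫_A : A)‖ ≤ (Cq - 1)/((n:ℝ)+2) := h1.trans h3
    have hn2 : (0:ℝ) < (n:ℝ) + 2 := by positivity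
    rw [le_div_iff₀ hn2] at h5
    rw [div_lt_iff₀ hpos'] at hn
    nlinarith [norm_nonneg (⟪x, Q (G x)⟫_A : A)]
  exact norm_eq_zero.mp hz


end AuxiliaryLemmas

/-- For a selfadjoint regular operator `t` with Cayley transform `C`,
bounded transform `F` and `Q = (1+t²)^(-1/2)`, one has `I + C = 2 F (F - i Q)`. -/
theorem one_add_cayley_eq_two_mul_boundedTransform
    (t : UnboundedOp A E) (ht : t.IsSelfAdjointRegular)
    (Q F C : E →L[ℂ] E) (hQ : t.IsSqrtResolvent t Q) (hF : t.IsBoundedTransform Q F)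
    (hC : t.IsCayley C) :
    (1 : E →L[ℂ] E) + C = (2 : ℂ) • (F * (F - Complex.I • Q)) := by
  obtain ⟨hdense, _hclosed, ⟨hadj, _hmax⟩, -, -⟩ := ht
  obtain ⟨hQsym, hQpos, hres1, hres2⟩ := hQ
  obtain ⟨R, ⟨hR1, hR2⟩, hCx⟩ := hC
  -- basic app lemmas
  have happ_congr : ∀ (x y : E) (hx : x ∈ t.dom) (hy : y ∈ t.dom), x = y →
      t.app x hx = t.app y hy := by
    intro x y hx hy h
    subst h
    rfl
  have happ_sub : ∀ (x y : E) (hx : x ∈ t.dom) (hy : y ∈ t.dom) (hxy : x - y ∈ t.dom),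
      t.app (x - y) hxy = t.app x hx - t.app y hy := by
    intro x y hx hy hxy
    show t.toFun ⟨x - y, hxy⟩ = t.toFun ⟨x, hx⟩ - t.toFun ⟨y, hy⟩
    rw [show (⟨x - y, hxy⟩ : t.dom) = ⟨x, hx⟩ - ⟨y, hy⟩ from rfl]
    exact map_sub _ _ _
  have happ_smul : ∀ (c : ℂ) (x : E) (hx : x ∈ t.dom) (hcx : c • x ∈ t.dom),
      t.app (c • x) hcx = c • t.app x hx := by
    intro c x hx hcx
    show t.toFun ⟨c • x, hcx⟩ = c • t.toFun ⟨x, hx⟩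
    rw [show (⟨c • x, hcx⟩ : t.dom) = c • ⟨x, hx⟩ from rfl]
    exact map_smul _ _ _
  -- resolvent-square data
  have hdom2 : ∀ x : E, Q (Q x) ∈ t.dom := fun x => (hres1 x).choose
  have hdom2' : ∀ x : E, t.app (Q (Q x)) (hdom2 x) ∈ t.dom :=
    fun x => (hres1 x).choose_spec.choose
  have heq2 : ∀ x : E, t.app (t.app (Q (Q x)) (hdom2 x)) (hdom2' x) + Q (Q x) = x :=
    fun x => (hres1 x).choose_spec.choose_spec
  have heq2' : ∀ x : E, t.app (t.app (Q (Q x)) (hdom2 x)) (hdom2' x) = x - Q (Q x) :=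
    fun x => eq_sub_of_add_eq (heq2 x)
  -- bounded transform data
  have hQdom : ∀ x : E, Q x ∈ t.dom := fun x => (hF x).choose
  have hFeq : ∀ x : E, F x = t.app (Q x) (hQdom x) := fun x => (hF x).choose_spec
  -- resolvent data
  have hRdom : ∀ x : E, R x ∈ t.dom := fun x => (hR1 x).choose
  have hReq : ∀ x : E, t.app (R x) (hRdom x) + Complex.I • R x = x :=
    fun x => (hR1 x).choose_spec
  have hCeq : ∀ x : E, C x = t.app (R x) (hRdom x) - Complex.I • R x := by
    intro x
    obtain ⟨h, hc⟩ := hCx x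
    exact hc
  -- Q² commutes with t on the domain
  have hcomm2 : ∀ (x : E) (hx : x ∈ t.dom), Q (Q (t.app x hx)) = t.app (Q (Q x)) (hdom2 x) := by
    intro x hx
    have hmem : t.app (t.app (Q (Q x)) (hdom2 x)) (hdom2' x) ∈ t.dom := by
      rw [heq2' x]
      exact sub_mem hx (hdom2 x)
    have key := hres2 (t.app (Q (Q x)) (hdom2 x)) (hdom2' x) hmem
    have harg : t.app (t.app (t.app (Q (Q x)) (hdom2 x)) (hdom2' x)) hmem
        = t.app x hx - t.app (Q (Q x)) (hdom2 x) := by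
      rw [happ_congr _ (x - Q (Q x)) hmem (sub_mem hx (hdom2 x)) (heq2' x)]
      exact happ_sub x (Q (Q x)) hx (hdom2 x) _
    rw [harg] at key
    have harg2 : t.app (Q (Q x)) (hdom2 x) + (t.app x hx - t.app (Q (Q x)) (hdom2 x))
        = t.app x hx := by abel
    rw [harg2] at key
    exact key
  -- A-valued contraction property of Q
  have hQtQt : ∀ (x : E) (hx : x ∈ t.dom),
      (⟪Q (t.app x hx), Q (t.app x hx)⟫_A : A) = ⟪x, x⟫_A - ⟪Q x, Q x⟫_A := by
    intro x hx
    calc (⟪Q (t.app x hx), Q (t.app x hx)⟫_A : A)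
        = ⟪t.app x hx, Q (Q (t.app x hx))⟫_A := hQsym (t.app x hx) (Q (t.app x hx))
      _ = ⟪t.app x hx, t.app (Q (Q x)) (hdom2 x)⟫_A := by rw [hcomm2 x hx]
      _ = ⟪x, t.app (t.app (Q (Q x)) (hdom2 x)) (hdom2' x)⟫_A := hadj x hx _ (hdom2' x)
      _ = ⟪x, x - Q (Q x)⟫_A := by rw [heq2' x]
      _ = ⟪x, x⟫_A - ⟪Q x, Q x⟫_A := by
          rw [CStarModule.inner_sub_right]
          congr 1
          exact (hQsym x (Q x)).symm
  have hQcontr : ∀ x : E, (⟪Q x, Q x⟫_A : A) ≤ ⟪x, x⟫_A := by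
    have hclosed : IsClosed {y : E | (0:A) ≤ ⟪y, y⟫_A - ⟪Q y, Q y⟫_A} := by
      have hcont : Continuous fun y : E => (⟪y, y⟫_A : A) - ⟪Q y, Q y⟫_A := by fun_prop
      exact IsClosed.preimage hcont CStarAlgebra.isClosed_nonneg
    have hsubset : (t.dom : Set E) ⊆ {y : E | (0:A) ≤ ⟪y, y⟫_A - ⟪Q y, Q y⟫_A} := by
      intro y hy
      have : (⟪y, y⟫_A : A) - ⟪Q y, Q y⟫_A = ⟪Q (t.app y hy), Q (t.app y hy)⟫_A :=
        (hQtQt y hy).symm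
      show (0:A) ≤ ⟪y, y⟫_A - ⟪Q y, Q y⟫_A
      rw [this]
      exact CStarModule.inner_self_nonneg
    intro x
    have hx : x ∈ closure (t.dom : Set E) := hdense x
    have := (hclosed.closure_subset_iff.mpr hsubset) hx
    exact sub_nonneg.mp this
  -- Q F is symmetric
  have hQFsym : ∀ x y : E, (⟪Q (F x), y⟫_A : A) = ⟪x, Q (F y)⟫_A := by
    intro x y
    calc (⟪Q (F x), y⟫_A : A) = ⟪F x, Q y⟫_A := hQsym (F x) y
      _ = ⟪t.app (Q x) (hQdom x), Q y⟫_A := by rw [hFeq x]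
      _ = ⟪Q x, t.app (Q y) (hQdom y)⟫_A := hadj (Q x) (hQdom x) (Q y) (hQdom y)
      _ = ⟪Q x, F y⟫_A := by rw [← hFeq y]
      _ = ⟪x, Q (F y)⟫_A := hQsym x (F y)
  -- F Q is symmetric
  have hFQsym : ∀ x y : E, (⟪F (Q x), y⟫_A : A) = ⟪x, F (Q y)⟫_A := by
    intro x y
    have hdomcase : ∀ z, z ∈ t.dom → (⟪F (Q x), z⟫_A : A) = ⟪x, F (Q z)⟫_A := by
      intro z hz
      calc (⟪F (Q x), z⟫_A : A)
          = ⟪t.app (Q (Q x)) (hdom2 x), z⟫_A := by rw [hFeq (Q x)]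
        _ = ⟪Q (Q x), t.app z hz⟫_A := hadj _ (hdom2 x) z hz
        _ = ⟪Q x, Q (t.app z hz)⟫_A := hQsym (Q x) (t.app z hz)
        _ = ⟪x, Q (Q (t.app z hz))⟫_A := hQsym x (Q (t.app z hz))
        _ = ⟪x, t.app (Q (Q z)) (hdom2 z)⟫_A := by rw [hcomm2 z hz]
        _ = ⟪x, F (Q z)⟫_A := by rw [← hFeq (Q z)]
    have hfg : (fun z : E => (⟪F (Q x), z⟫_A : A)) = fun z : E => (⟪x, F (Q z)⟫_A : A) := by
      refine Continuous.ext_on hdense ?_ ?_ (fun z hz => hdomcase z hz)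
      · fun_prop
      · fun_prop
    exact congrFun hfg y
  -- Q² F = F Q²
  have hQQF : ∀ x : E, Q (Q (F x)) = F (Q (Q x)) := by
    intro x
    rw [hFeq x, hcomm2 (Q x) (hQdom x), hFeq (Q (Q x))]
  -- the commutator N
  set N : E →L[ℂ] E := Q.comp F - F.comp Q with hN
  have hNapp : ∀ x : E, N x = Q (F x) - F (Q x) := fun x => rfl
  have hNsym : ∀ x y : E, (⟪N x, y⟫_A : A) = ⟪x, N y⟫_A := by
    intro x y
    rw [hNapp, hNapp, CStarModule.inner_sub_left, CStarModule.inner_sub_right,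
      hQFsym x y, hFQsym x y]
  have hQN : ∀ x : E, Q (N x) = - N (Q x) := by
    intro x
    rw [hNapp, hNapp, map_sub]
    rw [hQQF x]
    abel
  -- diagonal bound for N²
  have hNbound : ∀ x : E, (⟪N x, N x⟫_A : A) ≤ (4:ℝ) • ⟪x, x⟫_A := by
    intro x
    have hQF2 : (⟪Q (F x), Q (F x)⟫_A : A) ≤ ⟪x, x⟫_A := by
      calc (⟪Q (F x), Q (F x)⟫_A : A)
          = ⟪F x, Q (Q (F x))⟫_A := hQsym (F x) (Q (F x))
        _ = ⟪F x, F (Q (Q x))⟫_A := by rw [hQQF x]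
        _ = ⟪t.app (Q x) (hQdom x), t.app (Q (Q (Q x))) (hdom2 (Q x))⟫_A := by
            rw [hFeq x, hFeq (Q (Q x))]
        _ = ⟪Q x, t.app (t.app (Q (Q (Q x))) (hdom2 (Q x))) (hdom2' (Q x))⟫_A :=
            hadj (Q x) (hQdom x) _ (hdom2' (Q x))
        _ = ⟪Q x, Q x - Q (Q (Q x))⟫_A := by rw [heq2' (Q x)]
        _ = ⟪Q x, Q x⟫_A - ⟪Q (Q x), Q (Q x)⟫_A := by
            rw [CStarModule.inner_sub_right, ← hQsym (Q x) (Q (Q x))]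
        _ ≤ ⟪Q x, Q x⟫_A := sub_le_self _ CStarModule.inner_self_nonneg
        _ ≤ ⟪x, x⟫_A := hQcontr x
    have hFQ2 : (⟪F (Q x), F (Q x)⟫_A : A) ≤ ⟪x, x⟫_A := by
      calc (⟪F (Q x), F (Q x)⟫_A : A)
          = ⟪t.app (Q (Q x)) (hdom2 x), t.app (Q (Q x)) (hdom2 x)⟫_A := by rw [hFeq (Q x)]
        _ = ⟪Q (Q x), t.app (t.app (Q (Q x)) (hdom2 x)) (hdom2' x)⟫_A :=
            hadj _ (hdom2 x) _ (hdom2' x)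
        _ = ⟪Q (Q x), x - Q (Q x)⟫_A := by rw [heq2' x]
        _ = ⟪Q (Q x), x⟫_A - ⟪Q (Q x), Q (Q x)⟫_A := by rw [CStarModule.inner_sub_right]
        _ ≤ ⟪Q (Q x), x⟫_A := sub_le_self _ CStarModule.inner_self_nonneg
        _ = ⟪Q x, Q x⟫_A := by rw [hQsym (Q x) x]
        _ ≤ ⟪x, x⟫_A := hQcontr x
    have hstep := inner_sub_self_le (A := A) (Q (F x)) (F (Q x))
    rw [hNapp]
    refine hstep.trans ?_
    have h1 : (2:ℝ) • (⟪Q (F x), Q (F x)⟫_A : A) + (2:ℝ) • ⟪F (Q x), F (Q x)⟫_A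
        ≤ (2:ℝ) • (⟪x, x⟫_A : A) + (2:ℝ) • ⟪x, x⟫_A :=
      add_le_add (smul_le_smul_of_nonneg_left hQF2 (by norm_num))
        (smul_le_smul_of_nonneg_left hFQ2 (by norm_num))
    refine h1.trans ?_
    rw [← add_smul]
    norm_num
  -- N = 0
  have hNzero : ∀ x : E, N x = 0 := by
    have happ0 : ∀ h0 : (0:E) ∈ t.dom, t.app 0 h0 = 0 := by
      intro h0
      show t.toFun ⟨0, h0⟩ = 0
      rw [show (⟨0, h0⟩ : t.dom) = 0 from rfl]
      exact map_zero _
    set G : E →L[ℂ] E := (8:ℝ)⁻¹ • N.comp N with hG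
    have hGapp : ∀ x : E, G x = (8:ℝ)⁻¹ • N (N x) := fun x => rfl
    have hNNsym : ∀ x y : E, (⟪N (N x), y⟫_A : A) = ⟪x, N (N y)⟫_A := by
      intro x y
      rw [hNsym (N x) y, hNsym x (N y)]
    have hGsym : ∀ x y : E, (⟪G x, y⟫_A : A) = ⟪x, G y⟫_A := by
      intro x y
      rw [hGapp, hGapp, CStarModule.inner_smul_left_real, CStarModule.inner_smul_right_real,
        hNNsym x y]
    have hGpos : ∀ x : E, (0:A) ≤ ⟪x, G x⟫_A := by
      intro x
      rw [hGapp, CStarModule.inner_smul_right_real, ← hNsym x (N x)]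
      exact smul_nonneg (by norm_num) CStarModule.inner_self_nonneg
    have hGle : ∀ x : E, (⟪x, G x⟫_A : A) ≤ useq 0 • ⟪x, x⟫_A := by
      intro x
      rw [hGapp, CStarModule.inner_smul_right_real, ← hNsym x (N x)]
      have h2 : (8:ℝ)⁻¹ • (⟪N x, N x⟫_A : A) ≤ (8:ℝ)⁻¹ • ((4:ℝ) • ⟪x, x⟫_A) :=
        smul_le_smul_of_nonneg_left (hNbound x) (by norm_num)
      refine h2.trans ?_
      rw [smul_smul, show (8:ℝ)⁻¹ * 4 = ((1:ℝ)/2) by norm_num,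
        show useq 0 = 1/2 from rfl]
    have hQcommG : ∀ x : E, Q (G x) = G (Q x) := by
      intro x
      rw [hGapp, hGapp, ContinuousLinearMap.map_smul_of_tower]
      congr 1
      rw [hQN (N x), hQN x, map_neg, neg_neg]
    have hnegG : ∀ x : E, (⟪x, Q (G x)⟫_A : A) ≤ 0 := by
      intro x
      rw [hGapp, ContinuousLinearMap.map_smul_of_tower, CStarModule.inner_smul_right_real, hQN (N x),
        CStarModule.inner_neg_right, ← hNsym x (Q (N x))]
      have h1 : -(⟪N x, Q (N x)⟫_A : A) ≤ 0 := neg_nonpos.mpr (hQpos (N x))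
      calc (8:ℝ)⁻¹ • -(⟪N x, Q (N x)⟫_A : A) ≤ (8:ℝ)⁻¹ • (0:A) :=
            smul_le_smul_of_nonneg_left h1 (by norm_num)
        _ = 0 := smul_zero _
    intro x
    have hz := inner_QG_eq_zero Q G hQsym hQpos hQcommG hGsym hGpos hGle hnegG x
    rw [hGapp, ContinuousLinearMap.map_smul_of_tower, CStarModule.inner_smul_right_real, hQN (N x),
      CStarModule.inner_neg_right, ← hNsym x (Q (N x))] at hz
    have h8 : (⟪N x, Q (N x)⟫_A : A) = 0 := by
      rcases smul_eq_zero.mp hz with h | h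
      · norm_num at h
      · exact neg_eq_zero.mp h
    have hQNx : Q (N x) = 0 := Q_apply_eq_zero Q hQsym hQpos (N x) h8
    have h0 : Q (Q (N x)) = 0 := by rw [hQNx, map_zero]
    have h1 : t.app (Q (Q (N x))) (hdom2 (N x)) = 0 := by
      rw [happ_congr _ 0 (hdom2 (N x)) (zero_mem t.dom) h0]
      exact happ0 _
    have h2 : t.app (t.app (Q (Q (N x))) (hdom2 (N x))) (hdom2' (N x)) = 0 := by
      rw [happ_congr _ 0 (hdom2' (N x)) (zero_mem t.dom) h1]
      exact happ0 _
    have h3 := heq2 (N x)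
    rw [h2, h0, add_zero] at h3
    exact h3.symm
  have hQFFQ : ∀ x : E, Q (F x) = F (Q x) := by
    intro x
    have := hNzero x
    rw [hNapp] at this
    exact sub_eq_zero.mp this
  -- formula for R
  have hRform : ∀ x : E, R x = t.app (Q (Q x)) (hdom2 x) - Complex.I • Q (Q x) := by
    intro x
    have hsm : Complex.I • Q (Q x) ∈ t.dom := Submodule.smul_mem _ _ (hdom2 x)
    have hymem : t.app (Q (Q x)) (hdom2 x) - Complex.I • Q (Q x) ∈ t.dom :=
      sub_mem (hdom2' x) hsm
    have hineq : t.app _ hymem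
        + Complex.I • (t.app (Q (Q x)) (hdom2 x) - Complex.I • Q (Q x)) = x := by
      rw [happ_sub _ _ (hdom2' x) hsm hymem, happ_smul Complex.I _ (hdom2 x) hsm, heq2' x,
        smul_sub, smul_smul, Complex.I_mul_I, neg_one_smul]
      abel
    have hfin := hR2 _ hymem
    rw [hineq] at hfin
    exact hfin
  -- F (F x) = x - Q (Q x)
  have hFF : ∀ x : E, F (F x) = x - Q (Q x) := by
    intro x
    have h1 : F (F x) = t.app (Q (F x)) (hQdom (F x)) := hFeq (F x)
    have h2 : Q (F x) = t.app (Q (Q x)) (hdom2 x) := by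
      rw [hQFFQ x, hFeq (Q x)]
    rw [h1, happ_congr _ _ (hQdom (F x)) (hdom2' x) h2]
    exact heq2' x
  have hFQapp : ∀ x : E, F (Q x) = t.app (Q (Q x)) (hdom2 x) := fun x => hFeq (Q x)
  -- final assembly
  ext x
  have hRx : t.app (R x) (hRdom x)
      = (x - Q (Q x)) - Complex.I • t.app (Q (Q x)) (hdom2 x) := by
    have hsm : Complex.I • Q (Q x) ∈ t.dom := Submodule.smul_mem _ _ (hdom2 x)
    have hymem : t.app (Q (Q x)) (hdom2 x) - Complex.I • Q (Q x) ∈ t.dom :=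
      sub_mem (hdom2' x) hsm
    rw [happ_congr (R x) _ (hRdom x) hymem (hRform x),
      happ_sub _ _ (hdom2' x) hsm hymem, happ_smul Complex.I _ (hdom2 x) hsm, heq2' x]
  have hLHS : ((1 : E →L[ℂ] E) + C) x = (2:ℂ) • t.app (R x) (hRdom x) := by
    have h1 : ((1 : E →L[ℂ] E) + C) x = x + C x := rfl
    have h2 : t.app (R x) (hRdom x) = x - Complex.I • R x := eq_sub_of_add_eq (hReq x)
    rw [h1, hCeq x, h2, two_smul]
    abel
  rw [hLHS, hRx]
  have hRHS : ((2 : ℂ) • (F * (F - Complex.I • Q))) x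
      = (2:ℂ) • (F (F x) - Complex.I • F (Q x)) := by
    simp only [ContinuousLinearMap.smul_apply, ContinuousLinearMap.mul_apply,
      ContinuousLinearMap.sub_apply, ContinuousLinearMap.smul_apply, map_sub, map_smul]
  rw [hRHS, hFF x, hFQapp x]

end RegularFredholm
end
end

section
/- Let t be a selfadjoint regular operator on a Hilbert C*-module E and D a selfadjoint bounded adjointable operator on E. Then C_{t+D} - C_t = (I - C_t) D (D + t + i)^{-1}, where C_s denotes the Cayley transform of a selfadjoint regular operator s. -/
/-! Framework: unbounded (regular) operators on Hilbert C⋆-modules, bounded adjointable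
operators, compact operators, Fredholm operators, Cayley and bounded transforms. -/

open scoped RightActions InnerProductSpace

noncomputable section

namespace RegularFredholm

/-- A right Hilbert C⋆-module over `A` is a (current Mathlib, left) Hilbert C⋆-module over
`Aᵐᵒᵖ`, with inner product `MulOpposite.op ⟪x, y⟫_A`. Used only to obtain the normed
structure on `E × E` below. -/
instance instCStarModuleMulOpposite {A : Type*} [NonUnitalCStarAlgebra A] [PartialOrder A]
    {E : Type*} [NormedAddCommGroup E] [NormedSpace ℂ E] [SMul Aᵐᵒᵖ E] [CStarModule A E] :
    _root_.CStarModule Aᵐᵒᵖ E where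
  inner x y := MulOpposite.op (⟪x, y⟫_A : A)
  inner_add_right := by simp [CStarModule.inner_add_right]
  inner_self_nonneg := by
    intro x
    show (0 : A) ≤ _
    exact CStarModule.inner_self_nonneg
  inner_self := by simp [CStarModule.inner_self]
  inner_op_smul_right := by
    intro a x y
    have := CStarModule.inner_op_smul_right (A := A) (a := a.unop) (x := x) (y := y)
    simp only [MulOpposite.op_unop] at this
    rw [this]; simp
  inner_smul_right_complex := by simp [CStarModule.inner_smul_right_complex]
  star_inner x y := by
    show MulOpposite.op (star (⟪x, y⟫_A : A)) = _
    rw [CStarModule.star_inner]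
  norm_eq_sqrt_norm_inner_self x := by
    rw [CStarModule.norm_eq_sqrt_norm_inner_self (A := A) x]
    exact congrArg Real.sqrt (MulOpposite.norm_op _).symm

section ProdInstances

variable {A : Type*} [NonUnitalCStarAlgebra A] [PartialOrder A] [StarOrderedRing A]
variable {E : Type*} [NormedAddCommGroup E] [NormedSpace ℂ E] [SMul Aᵐᵒᵖ E] [CStarModule A E]

/-- The norm `‖x‖ = √‖⟪x.1, x.1⟫_A + ⟪x.2, x.2⟫_A‖` on `E × E` as a Hilbert C⋆-module. -/
noncomputable instance : NormedAddCommGroup (WithCStarModule A (E × E)) :=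
  (inferInstance : NormedAddCommGroup (WithCStarModule Aᵐᵒᵖ (E × E)))

noncomputable instance : NormedSpace ℂ (WithCStarModule A (E × E)) :=
  (inferInstance : NormedSpace ℂ (WithCStarModule Aᵐᵒᵖ (E × E)))

/-- `E × E` is a Hilbert C⋆-module over `A`, with `⟪x, y⟫_A = ⟪x.1, y.1⟫_A + ⟪x.2, y.2⟫_A`. -/
noncomputable instance : CStarModule A (WithCStarModule A (E × E)) where
  inner x y := ⟪x.1, y.1⟫_A + ⟪x.2, y.2⟫_A
  inner_add_right := by
    intro x y z
    simp only [WithCStarModule.add_fst, WithCStarModule.add_snd, CStarModule.inner_add_right]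
    abel
  inner_self_nonneg := add_nonneg CStarModule.inner_self_nonneg CStarModule.inner_self_nonneg
  inner_self := by
    intro x
    refine ⟨fun h => ?_, fun h => by subst h; simp [(CStarModule.inner_self (A := A)).2]⟩
    apply (WithCStarModule.equiv A (E × E)).injective
    ext
    · refine CStarModule.inner_self.mp <| le_antisymm ?_ (CStarModule.inner_self_nonneg (A := A))
      exact le_add_of_nonneg_right CStarModule.inner_self_nonneg |>.trans_eq h
    · refine CStarModule.inner_self.mp <| le_antisymm ?_ (CStarModule.inner_self_nonneg (A := A))
      exact le_add_of_nonneg_left CStarModule.inner_self_nonneg |>.trans_eq h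
  inner_op_smul_right := by
    intro a x y
    show ⟪x.1, y.1 <• a⟫_A + ⟪x.2, y.2 <• a⟫_A = _
    simp [CStarModule.inner_op_smul_right, add_mul]
  inner_smul_right_complex := by
    intro z x y
    show ⟪x.1, z • y.1⟫_A + ⟪x.2, z • y.2⟫_A = _
    simp [CStarModule.inner_smul_right_complex, smul_add]
  star_inner x y := by
    show star (⟪x.1, y.1⟫_A + ⟪x.2, y.2⟫_A) = ⟪y.1, x.1⟫_A + ⟪y.2, x.2⟫_A
    simp [CStarModule.star_inner]
  norm_eq_sqrt_norm_inner_self x := by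
    show √‖MulOpposite.op (⟪x.1, x.1⟫_A : A) + MulOpposite.op ⟪x.2, x.2⟫_A‖ = _
    rw [← MulOpposite.op_add, MulOpposite.norm_op]

end ProdInstances


variable {A : Type*} [NonUnitalCStarAlgebra A] [PartialOrder A] [StarOrderedRing A]
variable {E : Type*} [NormedAddCommGroup E] [NormedSpace ℂ E] [SMul Aᵐᵒᵖ E] [CStarModule A E]

/-- For a selfadjoint regular operator `t` and a selfadjoint bounded
adjointable operator `D`, one has `C_{t+D} - C_t = (I - C_t) D (D + t + i)⁻¹`. -/
theorem cayley_addBounded_sub_cayley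
    (t : UnboundedOp A E) (ht : t.IsSelfAdjointRegular)
    (D : E →L[ℂ] E) (hD : IsAdjointableB A D D)
    (C C' R' : E →L[ℂ] E) (hC : t.IsCayley C) (hC' : (t.addBounded D).IsCayley C')
    (hR' : (t.addBounded D).IsResolvent Complex.I R') :
    C' - C = (1 - C) * (D * R') := by
  obtain ⟨R, hR, hCx⟩ := hC
  obtain ⟨R'', hR'', hC'x⟩ := hC'
  have hRR : ∀ x, R'' x = R' x := by
    intro x
    obtain ⟨h, hx⟩ := hR'.1 x
    conv_lhs => rw [← hx]
    exact hR''.2 _ h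
  have hCx' : ∀ z, C z = z - (2 * Complex.I) • R z := by
    intro z
    obtain ⟨h, e⟩ := hCx z
    obtain ⟨h2, e2⟩ := hR.1 z
    have e2' : t.app (R z) h + Complex.I • R z = z := e2
    rw [e]
    rw [eq_sub_of_add_eq e2']; module
  have hC'x' : ∀ z, C' z = z - (2 * Complex.I) • R' z := by
    intro z
    obtain ⟨h, e⟩ := hC'x z
    obtain ⟨h2, e2⟩ := hR''.1 z
    have e2' : (t.addBounded D).app (R'' z) h + Complex.I • R'' z = z := e2
    rw [e]
    rw [eq_sub_of_add_eq e2', hRR z]; module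
  have key : ∀ x, R x = R' x + R (D (R' x)) := by
    intro x
    obtain ⟨h, e⟩ := hR'.1 x
    have e' : t.app (R' x) h + D (R' x) + Complex.I • R' x = x := e
    have hx2 : t.app (R' x) h + Complex.I • R' x + D (R' x) = x := by
      rw [add_right_comm]; exact e'
    calc R x = R (t.app (R' x) h + Complex.I • R' x + D (R' x)) := by rw [hx2]
      _ = R (t.app (R' x) h + Complex.I • R' x) + R (D (R' x)) := map_add _ _ _
      _ = R' x + R (D (R' x)) := by rw [hR.2 (R' x) h]
  ext x
  simp only [ContinuousLinearMap.sub_apply, ContinuousLinearMap.mul_apply,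
    ContinuousLinearMap.one_apply]
  rw [hC'x' x, hCx' x, hCx' (D (R' x)), key x]
  module

end RegularFredholm
end
end
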